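/- Let k ≥ 0 be an integer and let q be a real number with q > 1 satisfying [2]·([4k+7] − [4k+5] − [4k+3]) = [4k+6] − [4k+4]. Define a vector δ on the vertices of H_k^p by δ(c_j) = [j+1] for 0 ≤ j ≤ 4k+3, δ(u_i) = [4k+5]/2, δ(s_i) = ([4k+6]−[4k+4])/2, and δ(t_i) = ([4k+7]−[4k+5]−[4k+3])/2 for i = 1,2. Then every entry of δ is strictly positive and A·δ = (q + q^{−1})·δ, where A is the adjacency matrix of H_k^p; thus δ is the Perron–Frobenius eigenvector of H_k^p with eigenvalue [2]. -/

import Mathlib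

/-- The vertex set of the principal graph `H_k^p`: the `4k+4` spine vertices
`c_0, …, c_{4k+3}`, then the branch vertices `u_1, u_2`, `s_1, s_2`, `t_1, t_2`. -/
abbrev EHVertex (k : ℕ) := Fin (4 * k + 4) ⊕ Fin 2 ⊕ Fin 2 ⊕ Fin 2

/-- The edge relation of `H_k^p`: `c_j — c_{j+1}`, `c_{4k+3} — u_i`, `u_i — s_i`,
`s_i — t_i`. -/
def EHedge (k : ℕ) : EHVertex k → EHVertex k → Bool
  | .inl i, .inl j => ((i : ℕ) + 1 == (j : ℕ)) || ((j : ℕ) + 1 == (i : ℕ))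
  | .inl i, .inr (.inl _) => (i : ℕ) == 4 * k + 3
  | .inr (.inl _), .inl i => (i : ℕ) == 4 * k + 3
  | .inr (.inl a), .inr (.inr (.inl b)) => a == b
  | .inr (.inr (.inl b)), .inr (.inl a) => a == b
  | .inr (.inr (.inl a)), .inr (.inr (.inr b)) => a == b
  | .inr (.inr (.inr b)), .inr (.inr (.inl a)) => a == b
  | _, _ => false

/-- The adjacency matrix of `H_k^p`. -/
def EHadj (k : ℕ) : Matrix (EHVertex k) (EHVertex k) ℝ :=
  Matrix.of fun v w => if EHedge k v w then 1 else 0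

lemma spine_sum (n : ℕ) (g : ℕ → ℝ) (i : ℕ) (hi : i < n) :
    ∑ j ∈ Finset.range n, (if (i + 1 = j ∨ j + 1 = i) then g j else 0)
      = (if i + 1 < n then g (i+1) else 0) + (if 1 ≤ i then g (i-1) else 0) := by
  have key : ∀ j, (if (i + 1 = j ∨ j + 1 = i) then g j else 0)
      = (if j = i + 1 then g j else 0) + (if j = i - 1 ∧ 1 ≤ i then g j else 0) := by
    intro j
    split_ifs <;> first | ring1 | (exfalso; omega)
  rw [Finset.sum_congr rfl (fun j _ => key j), Finset.sum_add_distrib]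
  congr 1
  · rw [Finset.sum_ite_eq' (Finset.range n) (i+1) g]
    simp [Finset.mem_range]
  · rcases Nat.eq_zero_or_pos i with h | h
    · simp [h]
    · have h1 : 1 ≤ i := h
      have h2 : ∀ j, (if j = i - 1 ∧ 1 ≤ i then g j else 0) = (if j = i - 1 then g j else 0) := by
        intro j; split_ifs <;> first | rfl | omega
      rw [Finset.sum_congr rfl (fun j _ => h2 j), Finset.sum_ite_eq' (Finset.range n) (i-1) g,
        if_pos (by simp [Finset.mem_range]; omega : i - 1 ∈ Finset.range n), if_pos h1]

/-- The vector of Perron–Frobenius dimensions on `H_k^p` has strictly positive entries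
and is an eigenvector of the adjacency matrix with eigenvalue `q + q⁻¹ = [2]`. -/
theorem stmt_1 (k : ℕ) (q : ℝ) (hq : 1 < q)
    (qi : ℕ → ℝ) (hqi : ∀ m : ℕ, qi m = (q ^ (m : ℤ) - q ^ (-(m : ℤ))) / (q - q⁻¹))
    (heigen : qi 2 * (qi (4 * k + 7) - qi (4 * k + 5) - qi (4 * k + 3))
        = qi (4 * k + 6) - qi (4 * k + 4))
    (δ : EHVertex k → ℝ)
    (hδ : δ = fun v => match v with
      | .inl j => qi ((j : ℕ) + 1)
      | .inr (.inl _) => qi (4 * k + 5) / 2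
      | .inr (.inr (.inl _)) => (qi (4 * k + 6) - qi (4 * k + 4)) / 2
      | .inr (.inr (.inr _)) => (qi (4 * k + 7) - qi (4 * k + 5) - qi (4 * k + 3)) / 2) :
    (∀ v, 0 < δ v) ∧ (EHadj k).mulVec δ = (q + q⁻¹) • δ := by
  have hq0 : (0:ℝ) < q := lt_trans one_pos hq
  have hqinv : q⁻¹ < 1 := inv_lt_one_of_one_lt₀ hq
  have hden : 0 < q - q⁻¹ := by linarith
  have hmul : q * q⁻¹ = 1 := mul_inv_cancel₀ hq0.ne'
  have hqi' : ∀ m : ℕ, qi m = (q ^ m - (q ^ m)⁻¹) / (q - q⁻¹) := by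
    intro m; rw [hqi, zpow_neg, zpow_natCast]
  -- positivity of the quantum integers
  have hpos : ∀ m : ℕ, 0 < qi (m + 1) := by
    intro m
    rw [hqi']
    apply div_pos _ hden
    have h1 : (1:ℝ) < q ^ (m+1) := one_lt_pow₀ hq (by omega)
    have h2 : (q ^ (m+1))⁻¹ < 1 := inv_lt_one_of_one_lt₀ h1
    linarith
  -- basic recurrence [m] + [m+2] = [2][m+1]
  have hrec : ∀ m : ℕ, qi m + qi (m + 2) = (q + q⁻¹) * qi (m + 1) := by
    intro m
    rw [hqi', hqi', hqi', ← add_div, ← mul_div_assoc]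
    congr 1
    rw [← inv_pow, ← inv_pow, ← inv_pow]
    linear_combination ((q⁻¹) ^ m - q ^ m) * hmul
  -- [m] < [m+2]
  have hmono : ∀ m : ℕ, qi m < qi (m + 2) := by
    intro m
    rw [hqi', hqi']
    have h1 : q ^ m < q ^ (m+2) := pow_lt_pow_right₀ hq (by omega)
    have h2 : (q ^ (m+2))⁻¹ < (q ^ m)⁻¹ := by gcongr
    apply div_lt_div_of_pos_right ?_ hden
    linarith
  have hq2 : qi 2 = q + q⁻¹ := by
    have h0 : qi 0 = 0 := by rw [hqi']; simp
    have h1 : qi 1 = 1 := by rw [hqi']; simp [div_self hden.ne']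
    have := hrec 0
    rw [h0, h1, mul_one, zero_add] at this
    exact this
  have hq2pos : 0 < q + q⁻¹ := by positivity
  have hs : 0 < qi (4 * k + 6) - qi (4 * k + 4) := by
    have := hmono (4 * k + 4)
    rw [show 4 * k + 4 + 2 = 4 * k + 6 from by omega] at this
    linarith
  have ht : 0 < qi (4 * k + 7) - qi (4 * k + 5) - qi (4 * k + 3) := by
    by_contra h
    push_neg at h
    have : qi 2 * (qi (4 * k + 7) - qi (4 * k + 5) - qi (4 * k + 3)) ≤ 0 := by
      rw [hq2]
      exact mul_nonpos_of_nonneg_of_nonpos hq2pos.le h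
    linarith [heigen]
  constructor
  · intro v
    rw [hδ]
    rcases v with i | a | a | a
    · exact hpos (i : ℕ)
    · simpa using div_pos (hpos (4 * k + 4)) two_pos
    · simpa using div_pos hs two_pos
    · simpa using div_pos ht two_pos
  · funext v
    rcases v with i | a | a | a
    · -- spine vertex c_i
      simp only [Matrix.mulVec, dotProduct, EHadj, Matrix.of_apply, EHedge,
        Fintype.sum_sum_type, Fin.sum_univ_two, hδ, Pi.smul_apply, smul_eq_mul,
        beq_iff_eq, Bool.or_eq_true, ite_mul, one_mul, zero_mul, Bool.false_eq_true,
        if_false, add_zero, zero_add]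
      rw [Fin.sum_univ_eq_sum_range
          (fun j => if (i:ℕ) + 1 = j ∨ j + 1 = (i:ℕ) then qi (j + 1) else 0) (4 * k + 4),
        spine_sum (4 * k + 4) (fun j => qi (j + 1)) (i : ℕ) i.isLt]
      rcases Nat.lt_or_ge (i : ℕ) 1 with h0 | h1
      · have hi0 : (i : ℕ) = 0 := by omega
        have h0 : qi 0 = 0 := by rw [hqi']; simp
        have hr0 := hrec 0
        rw [h0, zero_add] at hr0
        rw [hi0, if_pos (by omega), if_neg (by omega), if_neg (by omega)]
        norm_num
        linarith
      · rcases Nat.lt_or_ge (i : ℕ) (4 * k + 3) with h2 | h2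
        · rw [if_pos (by omega), if_pos h1, if_neg (by omega)]
          have := hrec (i : ℕ)
          have e : (i : ℕ) - 1 + 1 = (i : ℕ) := by omega
          rw [e, add_zero]
          have e2 : (i : ℕ) + 1 + 1 = (i : ℕ) + 2 := by omega
          rw [e2]
          linarith [hrec (i : ℕ)]
        · have hi : (i : ℕ) = 4 * k + 3 := by omega
          rw [if_neg (by omega), if_pos (by omega), if_pos hi]
          have := hrec (4 * k + 3)
          rw [show 4 * k + 3 + 2 = 4 * k + 5 from by omega,
              show 4 * k + 3 + 1 = 4 * k + 4 from by omega] at this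
          rw [hi, show 4 * k + 3 - 1 + 1 = 4 * k + 3 from by omega,
              show 4 * k + 3 + 1 = 4 * k + 4 from by omega]
          linarith
    · -- vertex u_a
      simp only [Matrix.mulVec, dotProduct, EHadj, Matrix.of_apply, EHedge,
        Fintype.sum_sum_type, Fin.sum_univ_two, hδ, Pi.smul_apply, smul_eq_mul,
        beq_iff_eq, ite_mul, one_mul, zero_mul, Bool.false_eq_true, if_false,
        add_zero, zero_add]
      rw [Fin.sum_univ_eq_sum_range
          (fun j => if j = 4 * k + 3 then qi (j + 1) else 0) (4 * k + 4),
        Finset.sum_ite_eq' (Finset.range (4 * k + 4)) (4 * k + 3) (fun j => qi (j + 1)),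
        if_pos (by simp)]
      have h1 := hrec (4 * k + 4)
      rw [show 4 * k + 4 + 2 = 4 * k + 6 from by omega,
          show 4 * k + 4 + 1 = 4 * k + 5 from by omega] at h1
      fin_cases a <;> simp <;> linarith
    · -- vertex s_a
      simp only [Matrix.mulVec, dotProduct, EHadj, Matrix.of_apply, EHedge,
        Fintype.sum_sum_type, Fin.sum_univ_two, hδ, Pi.smul_apply, smul_eq_mul,
        beq_iff_eq, ite_mul, one_mul, zero_mul, Bool.false_eq_true, if_false,
        add_zero, zero_add, Finset.sum_const_zero]
      have h1 := hrec (4 * k + 5)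
      rw [show 4 * k + 5 + 2 = 4 * k + 7 from by omega,
          show 4 * k + 5 + 1 = 4 * k + 6 from by omega] at h1
      have h2 := hrec (4 * k + 3)
      rw [show 4 * k + 3 + 2 = 4 * k + 5 from by omega,
          show 4 * k + 3 + 1 = 4 * k + 4 from by omega] at h2
      fin_cases a <;> simp <;> linarith
    · -- vertex t_a
      simp only [Matrix.mulVec, dotProduct, EHadj, Matrix.of_apply, EHedge,
        Fintype.sum_sum_type, Fin.sum_univ_two, hδ, Pi.smul_apply, smul_eq_mul,
        beq_iff_eq, ite_mul, one_mul, zero_mul, Bool.false_eq_true, if_false,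
        add_zero, zero_add, Finset.sum_const_zero]
      rw [hq2] at heigen
      fin_cases a <;> simp <;> linarith
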